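/- Let r be an integer and A(t) = t^r · Σ_{i≥0} A_i t^i ∈ M(n, ℂ((t))) with A_i ∈ M(n, ℂ), and suppose A_0 = diag(λ_1, …, λ_n) with λ_1, …, λ_n ∈ ℂ pairwise distinct. Then there exists T ∈ M(n, ℂ[[t]]), invertible over ℂ[[t]] and with T ≡ I_n (mod t), such that T A T⁻¹ = diag(g_1, …, g_n) with g_i ∈ ℂ((t)) satisfying g_i − λ_i t^r ∈ t^{r+1} ℂ[[t]]; in particular, the characteristic polynomial factors as det(y I_n − A(t)) = ∏_{i=1}^n (y − g_i) in ℂ((t))[y]. -/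

import Mathlib

open Polynomial


open Matrix

noncomputable section
variable {n : ℕ} (lam : Fin n → ℂ) (Bc : ℕ → Matrix (Fin n) (Fin n) ℂ)

/-- Recursive construction of coefficients of the conjugating matrix and the diagonal. -/
def Fseq : ℕ → Matrix (Fin n) (Fin n) ℂ × (Fin n → ℂ)
  | 0 => (1, lam)
  | (k+1) =>
    let S : Matrix (Fin n) (Fin n) ℂ :=
      (∑ a ∈ (Finset.Ico 1 (k+1)).attach,
        Matrix.diagonal (Fseq a.1).2 * (Fseq (k+1 - a.1)).1)
      - ∑ a ∈ (Finset.range (k+1)).attach, (Fseq a.1).1 * Bc (k+1 - a.1)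
    (Matrix.of fun i j => if i = j then 0 else S i j / (lam j - lam i),
     fun i => -(S i i))
termination_by k => k
decreasing_by
  all_goals (first
    | (have := Finset.mem_Ico.mp a.2; omega)
    | (have := Finset.mem_range.mp a.2; omega))

def Sdef (k : ℕ) : Matrix (Fin n) (Fin n) ℂ :=
  (∑ a ∈ Finset.Ico 1 (k+1),
      Matrix.diagonal (Fseq lam Bc a).2 * (Fseq lam Bc (k+1 - a)).1)
    - ∑ a ∈ Finset.range (k+1), (Fseq lam Bc a).1 * Bc (k+1 - a)

lemma Fseq_zero : Fseq lam Bc 0 = (1, lam) := by rw [Fseq]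

lemma Fseq_succ (k : ℕ) :
    Fseq lam Bc (k+1) =
      (Matrix.of fun i j => if i = j then 0 else Sdef lam Bc k i j / (lam j - lam i),
       fun i => -(Sdef lam Bc k i i)) := by
  rw [Fseq, Sdef,
    Finset.sum_attach (f := fun a => Matrix.diagonal (Fseq lam Bc a).2 * (Fseq lam Bc (k+1-a)).1),
    Finset.sum_attach (f := fun a => (Fseq lam Bc a).1 * Bc (k+1-a))]

lemma Fseq_zero_fst : (Fseq lam Bc 0).1 = 1 := by rw [Fseq_zero]
lemma Fseq_zero_snd : (Fseq lam Bc 0).2 = lam := by rw [Fseq_zero]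
lemma Fseq_succ_fst (k : ℕ) : (Fseq lam Bc (k+1)).1
    = Matrix.of fun i j => if i = j then 0 else Sdef lam Bc k i j / (lam j - lam i) := by
  rw [Fseq_succ]
lemma Fseq_succ_snd (k : ℕ) : (Fseq lam Bc (k+1)).2
    = fun i => -(Sdef lam Bc k i i) := by rw [Fseq_succ]

lemma Tk_comm (hlam : Function.Injective lam) (S : Matrix (Fin n) (Fin n) ℂ) :
    (Matrix.of fun i j => if i = j then 0 else S i j / (lam j - lam i)) * Matrix.diagonal lam
      - Matrix.diagonal lam *
        (Matrix.of fun i j => if i = j then 0 else S i j / (lam j - lam i))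
      - Matrix.diagonal (fun i => -(S i i)) = S := by
  ext i j
  by_cases h : i = j
  · subst h
    simp [Matrix.mul_diagonal, Matrix.diagonal_mul, Matrix.diagonal_apply_eq]
  · have hl : lam j - lam i ≠ 0 := sub_ne_zero.mpr (fun hc => h (hlam hc).symm)
    simp only [Matrix.sub_apply, Matrix.mul_diagonal, Matrix.diagonal_mul, Matrix.of_apply,
      Matrix.diagonal_apply_ne _ h, if_neg h, sub_zero]
    field_simp

lemma Fseq_key (hlam : Function.Injective lam) (hB0 : Bc 0 = Matrix.diagonal lam) (k : ℕ) :
    ∑ ab ∈ Finset.HasAntidiagonal.antidiagonal k, (Fseq lam Bc ab.1).1 * Bc ab.2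
      = ∑ ab ∈ Finset.HasAntidiagonal.antidiagonal k,
          Matrix.diagonal (Fseq lam Bc ab.1).2 * (Fseq lam Bc ab.2).1 := by
  cases k with
  | zero => simp [Fseq_zero, hB0]
  | succ k =>
    rw [Finset.Nat.sum_antidiagonal_eq_sum_range_succ_mk,
      Finset.Nat.sum_antidiagonal_eq_sum_range_succ_mk]
    rw [Finset.sum_range_succ (fun a => (Fseq lam Bc a).1 * Bc (k+1-a)) (k+1)]
    rw [Finset.sum_range_succ'
      (fun a => Matrix.diagonal (Fseq lam Bc a).2 * (Fseq lam Bc (k+1-a)).1) (k+1)]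
    rw [Finset.sum_range_succ
      (fun a => Matrix.diagonal (Fseq lam Bc (a+1)).2 * (Fseq lam Bc (k+1-(a+1))).1) k]
    have hY : ∑ a ∈ Finset.range k,
        Matrix.diagonal (Fseq lam Bc (a+1)).2 * (Fseq lam Bc (k+1-(a+1))).1
        = Sdef lam Bc k + ∑ a ∈ Finset.range (k+1), (Fseq lam Bc a).1 * Bc (k+1-a) := by
      rw [Sdef, sub_add_cancel, Finset.sum_Ico_eq_sum_range]
      apply Finset.sum_congr (by norm_num)
      intro a ha
      have h1 : 1 + a = a + 1 := by omega
      rw [h1]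
    simp only [Nat.sub_self, Nat.add_sub_cancel_left, Nat.add_sub_cancel, Nat.sub_zero]
    rw [hY, hB0, Fseq_zero_fst, Fseq_zero_snd]
    have h : (Fseq lam Bc (k+1)).1 * Matrix.diagonal lam
        - Matrix.diagonal lam * (Fseq lam Bc (k+1)).1
        - Matrix.diagonal (Fseq lam Bc (k+1)).2 = Sdef lam Bc k := by
      rw [Fseq_succ_fst, Fseq_succ_snd]
      exact Tk_comm lam hlam (Sdef lam Bc k)
    rw [mul_one, ← h]
    abel

def Tmat : Matrix (Fin n) (Fin n) (PowerSeries ℂ) :=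
  Matrix.of fun p q => PowerSeries.mk fun k => (Fseq lam Bc k).1 p q

def gps (i : Fin n) : PowerSeries ℂ := PowerSeries.mk fun k => (Fseq lam Bc k).2 i

def Bmat : Matrix (Fin n) (Fin n) (PowerSeries ℂ) :=
  Matrix.of fun p q => PowerSeries.mk fun k => Bc k p q

lemma TB_eq (hlam : Function.Injective lam) (hB0 : Bc 0 = Matrix.diagonal lam) :
    Tmat lam Bc * Bmat Bc = Matrix.diagonal (gps lam Bc) * Tmat lam Bc := by
  ext p q k
  have hk := congrFun (congrFun (Fseq_key lam Bc hlam hB0 k) p) q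
  rw [Matrix.mul_apply, Matrix.diagonal_mul]
  simp only [Tmat, Bmat, gps, Matrix.of_apply, map_sum, PowerSeries.coeff_mul,
    PowerSeries.coeff_mk]
  rw [Finset.sum_comm]
  simp only [← Matrix.mul_apply]
  rw [show (∑ ab ∈ Finset.HasAntidiagonal.antidiagonal k,
      ((Fseq lam Bc ab.1).2 p * (Fseq lam Bc ab.2).1 p q))
    = ∑ ab ∈ Finset.HasAntidiagonal.antidiagonal k,
      (Matrix.diagonal (Fseq lam Bc ab.1).2 * (Fseq lam Bc ab.2).1) p q from by
    refine Finset.sum_congr rfl fun ab _ => ?_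
    rw [Matrix.diagonal_mul]]
  rw [Matrix.sum_apply, Matrix.sum_apply] at hk
  exact hk

end

noncomputable section

lemma ofPS_coeff_neg (f : PowerSeries ℂ) {x : ℤ} (hx : x < 0) :
    (HahnSeries.ofPowerSeries ℤ ℂ f).coeff x = 0 := by
  rw [HahnSeries.ofPowerSeries_apply]
  apply HahnSeries.embDomain_notin_range
  rintro ⟨m, hm⟩
  have hm' : (m : ℤ) = x := hm
  omega


lemma single_mul_coeff (y : LaurentSeries ℂ) (r x : ℤ) (c : ℂ) :
    ((HahnSeries.single r c) * y).coeff x = c * y.coeff (x - r) := by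
  have := HahnSeries.coeff_single_mul_add (r := c) (x := y) (a := x - r) (b := r)
  rwa [sub_add_cancel] at this

lemma charpoly_conj {m : Type*} [Fintype m] [DecidableEq m] {R : Type*} [CommRing R]
    (u : (Matrix m m R)ˣ) (D A : Matrix m m R) (h : (↑u : Matrix m m R) * A = D * (↑u : Matrix m m R)) :
    A.charpoly = D.charpoly := by
  have hA : A = (↑u⁻¹ : Matrix m m R) * D * (↑u : Matrix m m R) := by
    rw [mul_assoc, ← h, ← mul_assoc]; simp
  let f : Matrix m m R →+* Matrix m m (Polynomial R) := (Polynomial.C : R →+* Polynomial R).mapMatrix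
  let v := Units.map f.toMonoidHom u
  have hscal : (↑v⁻¹ : Matrix m m (Polynomial R)) * Matrix.scalar m (Polynomial.X)
        * (↑v : Matrix m m (Polynomial R))
      = Matrix.scalar m (Polynomial.X) := by
    rw [mul_assoc, (Matrix.scalar_commute (Polynomial.X : Polynomial R)
      (fun r' => Commute.all _ _) (↑v : Matrix m m (Polynomial R))).eq, ← mul_assoc]
    simp
  have hcm : Matrix.charmatrix A
      = (↑v⁻¹ : Matrix m m (Polynomial R)) * Matrix.charmatrix D
        * (↑v : Matrix m m (Polynomial R)) := by
    rw [hA]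
    unfold Matrix.charmatrix
    have hmap : f ((↑u⁻¹ : Matrix m m R) * D * (↑u : Matrix m m R))
        = (↑v⁻¹ : Matrix m m (Polynomial R)) * f D * (↑v : Matrix m m (Polynomial R)) := by
      have hvinv : (↑v⁻¹ : Matrix m m (Polynomial R)) = f ↑u⁻¹ := by
        rw [show v⁻¹ = Units.map (↑f) u⁻¹ from
          (map_inv (Units.map (↑f : Matrix m m R →* Matrix m m (Polynomial R))) u).symm]
        rfl
      simp only [_root_.map_mul, hvinv]
      rfl
    rw [hmap, mul_sub, sub_mul, hscal]
  unfold Matrix.charpoly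
  rw [hcm, Matrix.det_mul, Matrix.det_mul]
  have hvv : ((↑v⁻¹ : Matrix m m (Polynomial R)).det) * ((↑v : Matrix m m (Polynomial R)).det)
      = 1 := by
    rw [← Matrix.det_mul]; simp
  linear_combination (Matrix.charmatrix D).det * hvv

lemma charpoly_diag {K : Type*} [CommRing K] {m : ℕ} (g : Fin m → K) :
    (Matrix.diagonal g).charpoly = ∏ i, (Polynomial.X - Polynomial.C (g i)) := by
  rw [Matrix.charpoly_of_upperTriangular _ (Matrix.blockTriangular_diagonal g)]
  simp

end


/-- **Formal diagonalization with distinct leading eigenvalues.**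
If `A(t) = t^r Σ_{i≥0} A_i t^i` has leading coefficient `A_0 = diag(λ₁, …, λₙ)` with
pairwise distinct `λᵢ`, then there is `T` over `ℂ[[t]]`, invertible and `≡ Iₙ (mod t)`,
with `T A T⁻¹ = diag(g₁, …, gₙ)`, where `gᵢ − λᵢ t^r ∈ t^{r+1} ℂ[[t]]`; in particular
`det(y Iₙ − A) = ∏ᵢ (y − gᵢ)` in `ℂ((t))[y]`. -/
theorem diagonalization_distinct_leading_term
    (n : ℕ) (r : ℤ) (A : Matrix (Fin n) (Fin n) (LaurentSeries ℂ))
    (lam : Fin n → ℂ) (hlam : Function.Injective lam)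
    (hord : ∀ i j, ∀ k : ℤ, k < r → (A i j).coeff k = 0)
    (hA0 : ∀ i j, (A i j).coeff r = if i = j then lam i else 0) :
    ∃ T : Matrix (Fin n) (Fin n) (PowerSeries ℂ),
      IsUnit T ∧
      (∀ p q, PowerSeries.constantCoeff (R := ℂ) (T p q) = if p = q then 1 else 0) ∧
      ∃ g : Fin n → LaurentSeries ℂ,
        T.map (HahnSeries.ofPowerSeries ℤ ℂ) * A
          = Matrix.diagonal g * T.map (HahnSeries.ofPowerSeries ℤ ℂ) ∧
        (∀ i, ∀ k : ℤ, k < r + 1 → (g i - HahnSeries.single r (lam i)).coeff k = 0) ∧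
        A.charpoly = ∏ i, (Polynomial.X - Polynomial.C (g i)) := by
  classical
  set Bc : ℕ → Matrix (Fin n) (Fin n) ℂ :=
    fun k => Matrix.of fun i j => (A i j).coeff (r + k) with hBc
  have hB0 : Bc 0 = Matrix.diagonal lam := by
    ext i j
    simp only [hBc, Matrix.of_apply, Nat.cast_zero, add_zero, hA0, Matrix.diagonal_apply]
  set T := Tmat lam Bc with hT
  -- constant coefficients of T
  have hconst : ∀ p q, PowerSeries.constantCoeff (R := ℂ) (T p q) = if p = q then 1 else 0 := by
    intro p q
    rw [hT, Tmat, Matrix.of_apply, ← PowerSeries.coeff_zero_eq_constantCoeff,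
      PowerSeries.coeff_mk, Fseq_zero_fst]
    exact Matrix.one_apply
  have hconstT : T.map (PowerSeries.constantCoeff (R := ℂ)) = 1 := by
    ext p q
    rw [Matrix.map_apply, hconst p q]
    exact (Matrix.one_apply).symm
  have hUnit : IsUnit T := by
    rw [Matrix.isUnit_iff_isUnit_det, PowerSeries.isUnit_iff_constantCoeff]
    rw [RingHom.map_det]
    rw [show (PowerSeries.constantCoeff (R := ℂ)).mapMatrix T = T.map (PowerSeries.constantCoeff (R := ℂ))
      from rfl, hconstT]
    simp
  -- the embedding
  set φ : PowerSeries ℂ →+* LaurentSeries ℂ := HahnSeries.ofPowerSeries ℤ ℂ with hφ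
  set g : Fin n → LaurentSeries ℂ :=
    fun i => (HahnSeries.single r (1 : ℂ)) * φ (gps lam Bc i) with hg
  -- entrywise description of A
  have hAB : ∀ i j, A i j = (HahnSeries.single r (1 : ℂ)) * φ ((Bmat Bc) i j) := by
    intro i j
    ext x
    rw [single_mul_coeff, one_mul]
    by_cases hx : x < r
    · rw [hord i j x hx, hφ, ofPS_coeff_neg _ (by omega)]
    · push_neg at hx
      obtain ⟨m, hm⟩ : ∃ m : ℕ, x - r = (m : ℤ) := ⟨(x - r).toNat, by omega⟩
      rw [hm, hφ, HahnSeries.ofPowerSeries_apply_coeff]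
      simp only [Bmat, Matrix.of_apply, PowerSeries.coeff_mk, hBc]
      congr 1
      omega
  -- main multiplicative identity over Laurent series
  have hTB := TB_eq lam Bc hlam hB0
  have h2 : T.map φ * (Bmat Bc).map φ
      = Matrix.diagonal (fun i => φ (gps lam Bc i)) * T.map φ := by
    have := congrArg (φ.mapMatrix) hTB
    simp only [_root_.map_mul, RingHom.mapMatrix_apply] at this
    rw [← hT] at this
    rw [this]
    congr 1
    rw [Matrix.diagonal_map (map_zero φ)]
  have hmain : T.map φ * A = Matrix.diagonal g * T.map φ := by
    refine Matrix.ext fun p q => ?_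
    rw [Matrix.mul_apply, Matrix.diagonal_mul]
    calc ∑ l, T.map φ p l * A l q
        = ∑ l, (HahnSeries.single r (1 : ℂ)) * (T.map φ p l * ((Bmat Bc).map φ) l q) := by
          refine Finset.sum_congr rfl fun l _ => ?_
          simp only [Matrix.map_apply]
          rw [hAB l q]
          ring
      _ = (HahnSeries.single r (1 : ℂ)) * (T.map φ * (Bmat Bc).map φ) p q := by
          rw [Matrix.mul_apply, Finset.mul_sum]
      _ = (HahnSeries.single r (1 : ℂ))
            * (Matrix.diagonal (fun i => φ (gps lam Bc i)) * T.map φ) p q := by rw [h2]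
      _ = g p * T.map φ p q := by
          rw [Matrix.diagonal_mul, hg]
          ring
  refine ⟨T, hUnit, hconst, g, hmain, ?_, ?_⟩
  · -- coefficient bound on g
    intro i k hk
    rw [HahnSeries.coeff_sub, hg]
    by_cases hkr : k = r
    · subst hkr
      rw [single_mul_coeff, one_mul, sub_self,
        show (0 : ℤ) = ((0 : ℕ) : ℤ) from rfl, hφ, HahnSeries.ofPowerSeries_apply_coeff]
      simp [gps, Fseq_zero_snd, HahnSeries.coeff_single]
    · have hkr' : k < r := by omega
      rw [single_mul_coeff, one_mul, hφ, ofPS_coeff_neg _ (by omega),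
        HahnSeries.coeff_single_of_ne hkr]
      simp
  · -- characteristic polynomial
    have hUnitφ : IsUnit (T.map φ) := by
      have := hUnit.map (φ.mapMatrix)
      rwa [RingHom.mapMatrix_apply] at this
    obtain ⟨u, hu⟩ := hUnitφ
    have := charpoly_conj u (Matrix.diagonal g) A (by rw [hu]; exact hmain)
    rw [this, charpoly_diag]
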